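/- arXiv:2405.02054 — 3 statements merged into one kernel-verified Lean document; each statement's English description precedes it below -/
import Mathlib

section
/- Let N' := {x + w(x) : x ∈ T} regarded as an additive subgroup of T, let π' : T → T/N' be the quotient map of additive groups, and let φ' : T → T/N' be the unique additive map with φ'(a ⊗ b) = π'(b·a² ⊗ b) for all a, b ∈ k (such a map exists and is unique). Then the inclusion T^{C₂} ↪ T induces a bijection from the kernel of the additive map π − φ|_{T^{C₂}} : T^{C₂} → T^{C₂}/N (sending x to π(x) − φ(x)) onto the kernel of π' − φ' : T → T/N'; and the natural map T^{C₂}/N → T/N' induces a bijection from the cokernel of π − φ|_{T^{C₂}} onto the cokernel of π' − φ'. -/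
open TensorProduct

noncomputable section
set_option maxHeartbeats 1000000
set_option synthInstance.maxHeartbeats 400000

variable (k : Type) [Field k] [CharP k 2]

instance : ExpChar k 2 := ExpChar.prime Nat.prime_two

/-- The subfield of squares of `k`. -/
def Ssub : Subfield k := (frobenius k 2).fieldRange

/-- `T := k ⊗_S k`. -/
abbrev Tk := k ⊗[Ssub k] k

/-- The involution `w` of `T` swapping the two tensor factors. -/
def wT : Tk k ≃ₐ[Ssub k] Tk k := Algebra.TensorProduct.comm (Ssub k) k k

lemma wT_tmul (a b : k) : wT k (a ⊗ₜ b) = b ⊗ₜ a := by simp [wT]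

/-- The subring `T^{C₂}` of fixed points of `w`. -/
def Tfix : Subring (Tk k) where
  carrier := {x | wT k x = x}
  mul_mem' := by intro a b ha hb; simp only [Set.mem_setOf_eq] at *; rw [map_mul, ha, hb]
  one_mem' := by simp only [Set.mem_setOf_eq]; rw [map_one]
  add_mem' := by intro a b ha hb; simp only [Set.mem_setOf_eq] at *; rw [map_add, ha, hb]
  zero_mem' := by simp only [Set.mem_setOf_eq]; rw [map_zero]
  neg_mem' := by intro a ha; simp only [Set.mem_setOf_eq] at *; rw [map_neg, ha]

lemma mem_Tfix_iff (x : Tk k) : x ∈ Tfix k ↔ wT k x = x := Iff.rfl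

/-- The map `x ↦ x + w(x)`. -/
def nmap : Tk k →+ Tk k :=
  AddMonoidHom.mk' (fun x => x + wT k x) (by
    intro a b
    show a + b + wT k (a + b) = (a + wT k a) + (b + wT k b)
    rw [map_add]; ring)

/-- The additive subgroup `N' = {x + w(x) : x ∈ T}` of `T`. -/
def Nsub : AddSubgroup (Tk k) := (nmap k).range

lemma mem_Nsub_iff (x : Tk k) : x ∈ Nsub k ↔ ∃ t : Tk k, t + wT k t = x := Iff.rfl

/-- `N` as an ideal of the subring of fixed points. -/
def Nideal : Ideal (Tfix k) where
  carrier := {x | (x : Tk k) ∈ Nsub k}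
  add_mem' := by
    intro a b ha hb
    simpa using add_mem ha hb
  zero_mem' := by simpa using zero_mem (Nsub k)
  smul_mem' := by
    rintro c x ⟨t, ht⟩
    refine ⟨(c : Tk k) * t, ?_⟩
    have hc : wT k (c : Tk k) = (c : Tk k) := c.2
    simp only [nmap, AddMonoidHom.mk'_apply] at ht ⊢
    rw [map_mul, hc, ← mul_add, ht]
    simp [smul_eq_mul]
  
/-- `Q := T^{C₂}/N`. -/
abbrev Qk := Tfix k ⧸ Nideal k

/-- The quotient map `π : T^{C₂} → T^{C₂}/N`. -/
def piQ : Tfix k →+* Qk k := Ideal.Quotient.mk (Nideal k)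

lemma sq_mem_Ssub (a : k) : a ^ 2 ∈ Ssub k := ⟨a, frobenius_def 2 a⟩

lemma sq_smul_def (a b : k) : (⟨a ^ 2, sq_mem_Ssub k a⟩ : Ssub k) • b = a ^ 2 * b := rfl

lemma sq_tmul (a b c : k) : ((a ^ 2 * b) ⊗ₜ[Ssub k] c : Tk k) = b ⊗ₜ (a ^ 2 * c) := by
  rw [← sq_smul_def k a b, ← sq_smul_def k a c, smul_tmul]

lemma elT_mem (a b : k) : ((b * a ^ 2) ⊗ₜ[Ssub k] b : Tk k) ∈ Tfix k := by
  rw [mem_Tfix_iff, wT_tmul, mul_comm b (a ^ 2), sq_tmul]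

/-- The element `b·a² ⊗ b` of `T^{C₂}`. -/
def elT (a b : k) : Tfix k := ⟨(b * a ^ 2) ⊗ₜ b, elT_mem k a b⟩

/-- The multiplication map `μ : T → k`. -/
def mulT : Tk k →+* k := (Algebra.TensorProduct.lmul' (Ssub k) (S := k)).toRingHom

lemma mulT_tmul (a b : k) : mulT k (a ⊗ₜ b) = a * b := by simp [mulT]

/-- The quotient map `π' : T → T/N'`. -/
def piQ' : Tk k →+ Tk k ⧸ Nsub k := QuotientAddGroup.mk' (Nsub k)

/-- The additive map `π − φ|_{T^{C₂}} : T^{C₂} → T^{C₂}/N`, for a given `φ`. -/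
def Dmap (φ : Tk k →+ Qk k) : Tfix k →+ Qk k :=
  (piQ k).toAddMonoidHom - φ.comp (Tfix k).subtype.toAddMonoidHom

instance : AddCommGroup (Tk k ⧸ Nsub k) := QuotientAddGroup.Quotient.addCommGroup _

/-- The additive map `π' − φ' : T → T/N'`, for a given `φ'`. -/
def Dmap' (φ' : Tk k →+ Tk k ⧸ Nsub k) : Tk k →+ Tk k ⧸ Nsub k := piQ' k - φ'

/- ### Auxiliary lemmas -/

lemma wT_invol (x : Tk k) : wT k (wT k x) = x := by
  induction x using TensorProduct.induction_on with
  | zero => simp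
  | tmul a b => rw [wT_tmul, wT_tmul]
  | add a b ha hb => rw [map_add, map_add, ha, hb]

lemma Nsub_subset_Tfix {x : Tk k} (hx : x ∈ Nsub k) : x ∈ Tfix k := by
  obtain ⟨t, rfl⟩ := hx
  show wT k (t + wT k t) = t + wT k t
  rw [map_add, wT_invol, add_comm]

/-- The natural additive map `j : T^{C₂}/N → T/N'`. -/
def jmap : Qk k →+ Tk k ⧸ Nsub k where
  toFun q := Quotient.liftOn' q (fun x => piQ' k (x : Tk k)) (by
    intro a b h
    have h1 : (Submodule.Quotient.mk a : Qk k) = Submodule.Quotient.mk b :=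
      Quotient.sound' h
    have h2 : a - b ∈ Nideal k := (Submodule.Quotient.eq _).mp h1
    have h3 : ((a : Tk k) - (b : Tk k)) ∈ Nsub k := h2
    exact (QuotientAddGroup.eq_iff_sub_mem).mpr h3)
  map_zero' := by
    show piQ' k ((0 : Tfix k) : Tk k) = 0
    simp
  map_add' := by
    intro p q
    obtain ⟨a, rfl⟩ := Submodule.Quotient.mk_surjective _ p
    obtain ⟨b, rfl⟩ := Submodule.Quotient.mk_surjective _ q
    show piQ' k ((a + b : Tfix k) : Tk k) = piQ' k (a : Tk k) + piQ' k (b : Tk k)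
    push_cast
    rw [map_add]

lemma jmap_piQ (x : Tfix k) : jmap k (piQ k x) = piQ' k (x : Tk k) := rfl

lemma jmap_injective : Function.Injective (jmap k) := by
  rw [injective_iff_map_eq_zero]
  intro q hq
  obtain ⟨x, rfl⟩ := Submodule.Quotient.mk_surjective _ q
  have hq' : piQ' k (x : Tk k) = 0 := hq
  have hx : (x : Tk k) ∈ Nsub k := (QuotientAddGroup.eq_zero_iff _).mp hq'
  exact (Submodule.Quotient.mk_eq_zero _).mpr hx

lemma jmap_phi (φ : Tk k →+ Qk k)
    (hφ : ∀ a b : k, φ (a ⊗ₜ b) = piQ k (elT k a b))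
    (φ' : Tk k →+ Tk k ⧸ Nsub k)
    (hφ' : ∀ a b : k, φ' (a ⊗ₜ b) = piQ' k ((b * a ^ 2) ⊗ₜ b))
    (t : Tk k) : jmap k (φ t) = φ' t := by
  induction t using TensorProduct.induction_on with
  | zero => simp
  | tmul a b => rw [hφ, hφ', jmap_piQ]; rfl
  | add a b ha hb => rw [map_add, map_add, map_add, ha, hb]

lemma jmap_Dmap (φ : Tk k →+ Qk k)
    (hφ : ∀ a b : k, φ (a ⊗ₜ b) = piQ k (elT k a b))
    (φ' : Tk k →+ Tk k ⧸ Nsub k)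
    (hφ' : ∀ a b : k, φ' (a ⊗ₜ b) = piQ' k ((b * a ^ 2) ⊗ₜ b))
    (x : Tfix k) : jmap k (Dmap k φ x) = Dmap' k φ' (x : Tk k) := by
  show jmap k (piQ k x - φ (x : Tk k)) = piQ' k (x : Tk k) - φ' (x : Tk k)
  rw [map_sub, jmap_piQ, jmap_phi k φ hφ φ' hφ']

section Aux

variable (φ : Tk k →+ Qk k) (φ' : Tk k →+ Tk k ⧸ Nsub k)

/-- Kernel part. -/
lemma ker_bijOn (hφ : ∀ a b : k, φ (a ⊗ₜ b) = piQ k (elT k a b))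
    (hφ' : ∀ a b : k, φ' (a ⊗ₜ b) = piQ' k ((b * a ^ 2) ⊗ₜ b)) :
    Set.BijOn (fun x : Tfix k => (x : Tk k))
      {x : Tfix k | Dmap k φ x = 0} {t : Tk k | Dmap' k φ' t = 0} := by
  have hsq := jmap_Dmap k φ hφ φ' hφ'
  refine ⟨?_, ?_, ?_⟩
  · intro x hx
    show Dmap' k φ' (x : Tk k) = 0
    rw [← hsq x, hx, map_zero]
  · intro x _ y _ h
    exact Subtype.ext h
  · intro t ht
    have ht0 : Dmap' k φ' t = 0 := ht
    obtain ⟨x, hx⟩ := Ideal.Quotient.mk_surjective (I := Nideal k) (φ t)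
    have hπ : piQ' k t = piQ' k (x : Tk k) := by
      have h1 : piQ' k t - φ' t = 0 := ht0
      have h2 : φ' t = piQ' k (x : Tk k) := by
        rw [← jmap_phi k φ hφ φ' hφ', ← hx]; exact jmap_piQ k x
      rw [sub_eq_zero] at h1
      rw [h1, h2]
    have hmem : t - (x : Tk k) ∈ Nsub k := (QuotientAddGroup.eq_iff_sub_mem).mp hπ
    have htfix : t ∈ Tfix k := by
      have := add_mem (Nsub_subset_Tfix k hmem) x.2
      simpa using this
    refine ⟨⟨t, htfix⟩, ?_, rfl⟩
    show Dmap k φ ⟨t, htfix⟩ = 0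
    apply jmap_injective k
    rw [hsq ⟨t, htfix⟩, map_zero]
    exact ht0

lemma coker_hker (hφ : ∀ a b : k, φ (a ⊗ₜ b) = piQ k (elT k a b))
    (hφ' : ∀ a b : k, φ' (a ⊗ₜ b) = piQ' k ((b * a ^ 2) ⊗ₜ b)) :
    (Dmap k φ).range ≤
      ((QuotientAddGroup.mk' (Dmap' k φ').range).comp (jmap k)).ker := by
  rintro q ⟨x, rfl⟩
  show QuotientAddGroup.mk' (Dmap' k φ').range (jmap k (Dmap k φ x)) = 0
  rw [jmap_Dmap k φ hφ φ' hφ' x]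
  exact (QuotientAddGroup.eq_zero_iff _).mpr ⟨(x : Tk k), rfl⟩

/-- The induced map on cokernels. -/
def gdef (hφ : ∀ a b : k, φ (a ⊗ₜ b) = piQ k (elT k a b))
    (hφ' : ∀ a b : k, φ' (a ⊗ₜ b) = piQ' k ((b * a ^ 2) ⊗ₜ b)) :
    (Qk k ⧸ (Dmap k φ).range) →+ ((Tk k ⧸ Nsub k) ⧸ (Dmap' k φ').range) :=
  QuotientAddGroup.lift _ ((QuotientAddGroup.mk' (Dmap' k φ').range).comp (jmap k))
    (coker_hker k φ φ' hφ hφ')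

lemma gdef_mk (hφ : ∀ a b : k, φ (a ⊗ₜ b) = piQ k (elT k a b))
    (hφ' : ∀ a b : k, φ' (a ⊗ₜ b) = piQ' k ((b * a ^ 2) ⊗ₜ b)) (q : Qk k) :
    gdef k φ φ' hφ hφ' (QuotientAddGroup.mk' (Dmap k φ).range q) =
      QuotientAddGroup.mk' (Dmap' k φ').range (jmap k q) := rfl

lemma gdef_spec (hφ : ∀ a b : k, φ (a ⊗ₜ b) = piQ k (elT k a b))
    (hφ' : ∀ a b : k, φ' (a ⊗ₜ b) = piQ' k ((b * a ^ 2) ⊗ₜ b)) (x : Tfix k) :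
    gdef k φ φ' hφ hφ' (QuotientAddGroup.mk' (Dmap k φ).range (piQ k x)) =
      QuotientAddGroup.mk' (Dmap' k φ').range (piQ' k (x : Tk k)) := by
  rw [gdef_mk, jmap_piQ]

lemma gdef_inj (hφ : ∀ a b : k, φ (a ⊗ₜ b) = piQ k (elT k a b))
    (hφ' : ∀ a b : k, φ' (a ⊗ₜ b) = piQ' k ((b * a ^ 2) ⊗ₜ b)) :
    Function.Injective (gdef k φ φ' hφ hφ') := by
  have hsq := jmap_Dmap k φ hφ φ' hφ'
  rw [injective_iff_map_eq_zero]
  intro z hz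
  obtain ⟨q, rfl⟩ := QuotientAddGroup.mk'_surjective _ z
  rw [gdef_mk] at hz
  have hmem : jmap k q ∈ (Dmap' k φ').range := (QuotientAddGroup.eq_zero_iff _).mp hz
  obtain ⟨t, ht⟩ := hmem
  obtain ⟨x, hx⟩ := Ideal.Quotient.mk_surjective (I := Nideal k) q
  obtain ⟨y, hy⟩ := Ideal.Quotient.mk_surjective (I := Nideal k) (φ t)
  have hφt : φ' t = piQ' k (y : Tk k) := by
    rw [← jmap_phi k φ hφ φ' hφ', ← hy]; exact jmap_piQ k y
  have hjq : jmap k q = piQ' k (x : Tk k) := by rw [← hx]; exact jmap_piQ k x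
  have hπ : piQ' k t = piQ' k ((x : Tk k) + (y : Tk k)) := by
    have h1 : piQ' k t - φ' t = piQ' k (x : Tk k) := by
      rw [← hjq, ← ht]; rfl
    rw [map_add, ← h1, hφt]; abel
  have hmem' : t - ((x : Tk k) + (y : Tk k)) ∈ Nsub k :=
    (QuotientAddGroup.eq_iff_sub_mem).mp hπ
  have htfix : t ∈ Tfix k := by
    have := add_mem (Nsub_subset_Tfix k hmem') (add_mem x.2 y.2)
    simpa using this
  have hq : Dmap k φ ⟨t, htfix⟩ = q := by
    apply jmap_injective k
    rw [hsq ⟨t, htfix⟩]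
    exact ht
  exact (QuotientAddGroup.eq_zero_iff _).mpr ⟨⟨t, htfix⟩, hq⟩

lemma gdef_surj (hφ : ∀ a b : k, φ (a ⊗ₜ b) = piQ k (elT k a b))
    (hφ' : ∀ a b : k, φ' (a ⊗ₜ b) = piQ' k ((b * a ^ 2) ⊗ₜ b)) :
    Function.Surjective (gdef k φ φ' hφ hφ') := by
  intro z
  obtain ⟨u, hu⟩ := QuotientAddGroup.mk'_surjective _ z
  obtain ⟨t, ht⟩ := QuotientAddGroup.mk'_surjective (Nsub k) u
  refine ⟨QuotientAddGroup.mk' (Dmap k φ).range (φ t), ?_⟩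
  have hmem : piQ' k t - φ' t ∈ (Dmap' k φ').range := ⟨t, rfl⟩
  have h0 : QuotientAddGroup.mk' (Dmap' k φ').range (piQ' k t - φ' t) = 0 :=
    (QuotientAddGroup.eq_zero_iff _).mpr hmem
  rw [map_sub, sub_eq_zero] at h0
  calc gdef k φ φ' hφ hφ' (QuotientAddGroup.mk' (Dmap k φ).range (φ t))
      = QuotientAddGroup.mk' (Dmap' k φ').range (jmap k (φ t)) := gdef_mk k φ φ' hφ hφ' _
    _ = QuotientAddGroup.mk' (Dmap' k φ').range (φ' t) := by
        rw [jmap_phi k φ hφ φ' hφ']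
    _ = QuotientAddGroup.mk' (Dmap' k φ').range (piQ' k t) := h0.symm
    _ = QuotientAddGroup.mk' (Dmap' k φ').range u := congrArg _ ht
    _ = z := hu

end Aux

theorem stmt_3 (φ : Tk k →+ Qk k)
    (hφ : ∀ a b : k, φ (a ⊗ₜ b) = piQ k (elT k a b))
    (φ' : Tk k →+ Tk k ⧸ Nsub k)
    (hφ' : ∀ a b : k, φ' (a ⊗ₜ b) = piQ' k ((b * a ^ 2) ⊗ₜ b)) :
    Set.BijOn (fun x : Tfix k => (x : Tk k))
      {x : Tfix k | Dmap k φ x = 0} {t : Tk k | Dmap' k φ' t = 0} ∧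
    ∃ g : (Qk k ⧸ (Dmap k φ).range) →+ ((Tk k ⧸ Nsub k) ⧸ (Dmap' k φ').range),
      (∀ x : Tfix k,
        g (QuotientAddGroup.mk' (Dmap k φ).range (piQ k x)) =
          QuotientAddGroup.mk' (Dmap' k φ').range (piQ' k (x : Tk k))) ∧
      Function.Bijective g :=
  ⟨ker_bijOn k φ φ' hφ hφ', gdef k φ φ' hφ hφ',
    gdef_spec k φ φ' hφ hφ', gdef_inj k φ φ' hφ hφ', gdef_surj k φ φ' hφ hφ'⟩
end
end

section
/- If {x_i}_{i∈I} is a 2-basis of k, then the family {Δ(x)^ξ : ξ ⊆ I finite} is a basis of T as a k-vector space (with k acting through the left tensor factor). -/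
open TensorProduct

noncomputable section
set_option maxHeartbeats 1000000
set_option synthInstance.maxHeartbeats 400000

variable (k : Type) [Field k] [CharP k 2]

/-- `Δ(a) := 1 ⊗ a + a ⊗ 1 ∈ T`. -/
def Delta (a : k) : Tk k := (1 : k) ⊗ₜ a + a ⊗ₜ (1 : k)

/-- If `{x_i}` is a 2-basis of `k`, then the family `(Δ(x)^ξ)` over finite
subsets `ξ ⊆ I` is a basis of `T` as a `k`-vector space (through the left tensor factor). -/
theorem stmt_4 {I : Type} (x : I → k)
    (h2basis : LinearIndependent (Ssub k) (fun ξ : Finset I => ∏ i ∈ ξ, x i) ∧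
      Submodule.span (Ssub k) (Set.range (fun ξ : Finset I => ∏ i ∈ ξ, x i)) = ⊤) :
    LinearIndependent k (fun ξ : Finset I => ∏ i ∈ ξ, Delta k (x i)) ∧
    Submodule.span k (Set.range (fun ξ : Finset I => ∏ i ∈ ξ, Delta k (x i))) = ⊤ := by
  classical
  obtain ⟨hli, hsp⟩ := h2basis
  set b : Module.Basis (Finset I) (Ssub k) k := Module.Basis.mk hli (le_of_eq hsp.symm) with hbdef
  have hb : ∀ ξ : Finset I, b ξ = ∏ i ∈ ξ, x i := fun ξ => Module.Basis.mk_apply _ _ _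
  set B : Module.Basis (Finset I) k (Tk k) := b.baseChange k with hBdef
  have hB : ∀ ξ : Finset I, B ξ = (1 : k) ⊗ₜ[Ssub k] (∏ i ∈ ξ, x i) := by
    intro ξ; rw [hBdef, Module.Basis.baseChange_apply, hb]
  have key : ∀ ξ : Finset I,
      (∏ i ∈ ξ, Delta k (x i)) = ∑ t ∈ ξ.powerset, (∏ i ∈ ξ \ t, x i) • B t := by
    intro ξ
    have h : ∀ i, Delta k (x i) = ((1 : k) ⊗ₜ[Ssub k] x i) + (x i ⊗ₜ[Ssub k] (1 : k)) := fun i => rfl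
    simp_rw [h]
    rw [Finset.prod_add]
    refine Finset.sum_congr rfl fun t ht => ?_
    have h1 : (∏ i ∈ t, ((1 : k) ⊗ₜ[Ssub k] x i) : Tk k) = (1 : k) ⊗ₜ (∏ i ∈ t, x i) := by
      simpa only [Algebra.TensorProduct.includeRight_apply] using
        (map_prod (Algebra.TensorProduct.includeRight : k →ₐ[Ssub k] Tk k) x t).symm
    have h2 : (∏ i ∈ ξ \ t, (x i ⊗ₜ[Ssub k] (1 : k)) : Tk k) = (∏ i ∈ ξ \ t, x i) ⊗ₜ (1 : k) := by
      simpa only [Algebra.TensorProduct.includeLeft_apply] using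
        (map_prod (Algebra.TensorProduct.includeLeft : k →ₐ[Ssub k] Tk k) x (ξ \ t)).symm
    rw [h1, h2, hB, Algebra.TensorProduct.tmul_mul_tmul, smul_tmul', smul_eq_mul]
    simp
  have hrepr : ∀ ξ η : Finset I,
      B.repr (∏ i ∈ ξ, Delta k (x i)) η = if η ⊆ ξ then ∏ i ∈ ξ \ η, x i else 0 := by
    intro ξ η
    rw [key, map_sum, Finsupp.finset_sum_apply]
    simp only [map_smul, Module.Basis.repr_self, Finsupp.smul_single, smul_eq_mul, mul_one,
      Finsupp.single_apply]
    rw [Finset.sum_ite_eq' ξ.powerset η (fun t => ∏ i ∈ ξ \ t, x i)]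
    simp [Finset.mem_powerset]
  constructor
  · rw [linearIndependent_iff']
    intro s g hsum ξ hξ
    by_contra hg
    set F := s.filter (fun ζ => g ζ ≠ 0) with hF
    have hFne : F.Nonempty := ⟨ξ, Finset.mem_filter.2 ⟨hξ, hg⟩⟩
    obtain ⟨ξ₀, hξ₀F, hmax⟩ := F.exists_max_image Finset.card hFne
    obtain ⟨hξ₀s, hgξ₀⟩ := Finset.mem_filter.1 hξ₀F
    have h0 : B.repr (∑ ζ ∈ s, g ζ • ∏ i ∈ ζ, Delta k (x i)) ξ₀ = g ξ₀ := by
      rw [map_sum, Finsupp.finset_sum_apply]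
      simp only [map_smul, Finsupp.smul_apply, smul_eq_mul, hrepr]
      rw [Finset.sum_eq_single ξ₀]
      · simp
      · intro ζ hζs hne
        by_cases hgz : g ζ = 0
        · simp [hgz]
        · have hζF : ζ ∈ F := Finset.mem_filter.2 ⟨hζs, hgz⟩
          have hcard := hmax ζ hζF
          have : ¬ ξ₀ ⊆ ζ := by
            intro hsub
            exact hne (Finset.eq_of_subset_of_card_le hsub hcard).symm
          simp [this]
      · intro h; exact absurd hξ₀s h
    rw [hsum, map_zero, Finsupp.zero_apply] at h0
    exact hgξ₀ h0.symm
  · have main : ∀ ξ : Finset I,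
        B ξ ∈ Submodule.span k (Set.range (fun ξ : Finset I => ∏ i ∈ ξ, Delta k (x i))) := by
      intro ξ
      induction ξ using Finset.strongInductionOn with
      | _ ξ ih =>
        have heq : B ξ = (∏ i ∈ ξ, Delta k (x i))
            - ∑ t ∈ ξ.powerset.erase ξ, (∏ i ∈ ξ \ t, x i) • B t := by
          rw [key, ← Finset.add_sum_erase _ _ (Finset.mem_powerset_self ξ),
            Finset.sdiff_self, Finset.prod_empty, one_smul]
          abel
        rw [heq]
        refine sub_mem (Submodule.subset_span ⟨ξ, rfl⟩)
          (Submodule.sum_mem _ fun t ht => ?_)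
        obtain ⟨hne, hmem⟩ := Finset.mem_erase.1 ht
        exact Submodule.smul_mem _ _ (ih t (lt_of_le_of_ne (Finset.mem_powerset.1 hmem) hne))
    rw [eq_top_iff, ← B.span_eq, Submodule.span_le]
    rintro _ ⟨ξ, rfl⟩
    exact main ξ
end
end

section
/- Let J := ker(μ : T → k), an ideal of T. If {x_i}_{i∈I} is a 2-basis of k, then for every q ≥ 1: (i) the family {Δ(x)^ξ : ξ ⊆ I finite, |ξ| ≥ q} is a basis of the ideal power J^q as a k-vector space; and (ii) the images of the elements Δ(x)^ξ with |ξ| = q form a basis of the quotient J^q/J^{q+1} as a k-vector space. -/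
open TensorProduct

noncomputable section
set_option maxHeartbeats 1000000
set_option synthInstance.maxHeartbeats 400000

variable (k : Type) [Field k] [CharP k 2]

/-- The ideal `J := ker(μ : T → k)`. -/
def Jk : Ideal (Tk k) := RingHom.ker (mulT k)

lemma Delta_mem_Jk (a : k) : Delta k a ∈ Jk k := by
  simp only [Jk, RingHom.mem_ker, Delta, map_add, mulT_tmul, one_mul, mul_one]
  exact CharTwo.add_self_eq_zero a

lemma prod_mem_pow_card {R : Type} [CommRing R] (J : Ideal R) {ι : Type} (ξ : Finset ι)
    (f : ι → R) (hf : ∀ i ∈ ξ, f i ∈ J) : (∏ i ∈ ξ, f i) ∈ J ^ ξ.card := by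
  induction ξ using Finset.cons_induction with
  | empty => simp
  | cons a s ha ih =>
    rw [Finset.prod_cons, Finset.card_cons, pow_succ, mul_comm]
    exact Ideal.mul_mem_mul (hf a (Finset.mem_cons_self a s))
      (ih fun i hi => hf i (Finset.mem_cons_of_mem hi))

/-- `Δ(x)^ξ := ∏_{i ∈ ξ} Δ(x_i)`. -/
def deltaProd {I : Type} (x : I → k) (ξ : Finset I) : Tk k := ∏ i ∈ ξ, Delta k (x i)

lemma deltaProd_mem {I : Type} (x : I → k) (q : ℕ) (ξ : Finset I) (h : q ≤ ξ.card) :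
    deltaProd k x ξ ∈ Jk k ^ q :=
  Ideal.pow_le_pow_right h (prod_mem_pow_card (Jk k) ξ _ fun i _ => Delta_mem_Jk k (x i))

/-- `J^q` as a `k`-submodule of `T`. -/
def JqMod (q : ℕ) : Submodule k (Tk k) := (Jk k ^ q).restrictScalars k

/-- `J^{q+1}` viewed inside `J^q`. -/
def JqSub (q : ℕ) : Submodule k (JqMod k q) := (JqMod k (q + 1)).comap (JqMod k q).subtype

set_option linter.unusedSectionVars false

section Aux
variable {I : Type} (x : I → k)
  (h2basis : LinearIndependent (Ssub k) (fun ξ : Finset I => ∏ i ∈ ξ, x i) ∧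
      Submodule.span (Ssub k) (Set.range (fun ξ : Finset I => ∏ i ∈ ξ, x i)) = ⊤)

/-- basis of k over Ssub k -/
def basisK : Module.Basis (Finset I) (Ssub k) k := Module.Basis.mk h2basis.1 (le_of_eq h2basis.2.symm)

/-- basis of T over k -/
def basisT : Module.Basis (Finset I) k (Tk k) := Algebra.TensorProduct.basis k (basisK k x h2basis)

lemma basisT_apply (ξ : Finset I) :
    basisT k x h2basis ξ = (1 : k) ⊗ₜ[Ssub k] (∏ i ∈ ξ, x i) := by
  rw [basisT, Algebra.TensorProduct.basis_apply, basisK, Module.Basis.mk_apply]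

end Aux
set_option linter.unusedSectionVars false
section Aux2
variable {I : Type} [DecidableEq I] (x : I → k)

lemma smul_eq_tmul_mul (a : k) (t : Tk k) : a • t = ((a ⊗ₜ[Ssub k] (1:k)) : Tk k) * t := by
  induction t using TensorProduct.induction_on with
  | zero => simp
  | tmul u v => rw [smul_tmul', Algebra.TensorProduct.tmul_mul_tmul, smul_eq_mul, one_mul]
  | add u v hu hv => rw [smul_add, mul_add, hu, hv]

lemma prod_tmul_right (ξ : Finset I) :
    (∏ i ∈ ξ, ((1:k) ⊗ₜ[Ssub k] x i : Tk k)) = (1:k) ⊗ₜ[Ssub k] (∏ i ∈ ξ, x i) := by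
  induction ξ using Finset.cons_induction with
  | empty => simp; rfl
  | cons a s ha ih =>
      rw [Finset.prod_cons, Finset.prod_cons, ih, Algebra.TensorProduct.tmul_mul_tmul, one_mul]

lemma prod_tmul_left (ξ : Finset I) :
    (∏ i ∈ ξ, ((x i : k) ⊗ₜ[Ssub k] (1:k) : Tk k)) = (∏ i ∈ ξ, x i) ⊗ₜ[Ssub k] (1:k) := by
  induction ξ using Finset.cons_induction with
  | empty => simp; rfl
  | cons a s ha ih =>
      rw [Finset.prod_cons, Finset.prod_cons, ih, Algebra.TensorProduct.tmul_mul_tmul, one_mul]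

lemma deltaProd_expand (ξ : Finset I) :
    deltaProd k x ξ = ∑ t ∈ ξ.powerset, (∏ i ∈ ξ \ t, x i) • ((1:k) ⊗ₜ[Ssub k] ∏ i ∈ t, x i) := by
  rw [deltaProd]
  simp only [Delta]
  rw [Finset.prod_add]
  refine Finset.sum_congr rfl fun t ht => ?_
  rw [prod_tmul_right, prod_tmul_left, smul_eq_tmul_mul, mul_comm,
    Algebra.TensorProduct.tmul_mul_tmul, one_mul, mul_one]

end Aux2
set_option linter.unusedSectionVars false
section Aux3
variable {I : Type} [DecidableEq I] (x : I → k)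
  (h2basis : LinearIndependent (Ssub k) (fun ξ : Finset I => ∏ i ∈ ξ, x i) ∧
      Submodule.span (Ssub k) (Set.range (fun ξ : Finset I => ∏ i ∈ ξ, x i)) = ⊤)

/-- The k-linear map sending basis vectors to delta products. -/
def phiT : Tk k →ₗ[k] Tk k := (basisT k x h2basis).constr k (fun ξ => deltaProd k x ξ)

lemma phiT_basis (ξ : Finset I) : phiT k x h2basis (basisT k x h2basis ξ) = deltaProd k x ξ :=
  Module.Basis.constr_basis _ _ _ _

lemma deltaProd_expand' (ξ : Finset I) :
    deltaProd k x ξ = ∑ t ∈ ξ.powerset, (∏ i ∈ ξ \ t, x i) • basisT k x h2basis t := by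
  rw [deltaProd_expand]
  exact Finset.sum_congr rfl fun t _ => by rw [basisT_apply]

lemma prod_sdiff_mul (ξ t s : Finset I) (hs : s ⊆ t) (ht : t ⊆ ξ) :
    (∏ i ∈ ξ \ t, x i) * (∏ i ∈ t \ s, x i) = ∏ i ∈ ξ \ s, x i := by
  rw [← Finset.prod_union (by
    simp only [Finset.disjoint_left, Finset.mem_sdiff]
    rintro a ⟨ha1, ha2⟩ ⟨ha3, ha4⟩; exact ha2 ha3)]
  congr 1
  ext a
  simp only [Finset.mem_union, Finset.mem_sdiff]
  constructor
  · rintro (⟨h1, h2⟩ | ⟨h1, h2⟩)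
    · exact ⟨h1, fun hc => h2 (hs hc)⟩
    · exact ⟨ht h1, h2⟩
  · rintro ⟨h1, h2⟩
    by_cases hat : a ∈ t
    · exact Or.inr ⟨hat, h2⟩
    · exact Or.inl ⟨h1, hat⟩

lemma phiT_deltaProd (ξ : Finset I) :
    phiT k x h2basis (deltaProd k x ξ) = basisT k x h2basis ξ := by
  set B := basisT k x h2basis with hB
  rw [deltaProd_expand' k x h2basis, map_sum]
  simp only [map_smul, phiT_basis]
  have step1 : ∀ t ∈ ξ.powerset, (∏ i ∈ ξ \ t, x i) • deltaProd k x t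
      = ∑ s ∈ t.powerset, ((∏ i ∈ ξ \ t, x i) * (∏ i ∈ t \ s, x i)) • B s := by
    intro t ht
    rw [deltaProd_expand' k x h2basis, Finset.smul_sum]
    exact Finset.sum_congr rfl fun s _ => by rw [smul_smul]
  rw [Finset.sum_congr rfl step1, Finset.sum_sigma']
  rw [Finset.sum_nbij' (i := fun p => (⟨p.2, p.1 \ p.2⟩ : Σ _ : Finset I, Finset I))
    (j := fun p => (⟨p.1 ∪ p.2, p.1⟩ : Σ _ : Finset I, Finset I))
    (t := ξ.powerset.sigma (fun s => (ξ \ s).powerset))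
    (g := fun p => (∏ i ∈ ξ \ p.1, x i) • B p.1)]
  · rw [Finset.sum_sigma]
    have : ∀ s ∈ ξ.powerset, (∑ _u ∈ (ξ \ s).powerset, (∏ i ∈ ξ \ s, x i) • B s)
        = (2 ^ (ξ \ s).card : ℕ) • ((∏ i ∈ ξ \ s, x i) • B s) := by
      intro s _
      rw [Finset.sum_const, Finset.card_powerset]
    rw [Finset.sum_congr rfl this]
    rw [Finset.sum_eq_single ξ]
    · simp
    · intro s hs hne
      have hcard : (ξ \ s).card ≠ 0 := by
        simp only [Finset.mem_powerset] at hs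
        intro hc
        exact hne (Finset.eq_of_subset_of_card_le hs (by
          have := Finset.card_sdiff_add_card_eq_card hs
          omega))
      have h2 : ((2 ^ (ξ \ s).card : ℕ) : k) = 0 := by
        push_cast
        rw [show ((2:k) = 0) from by exact_mod_cast CharP.cast_eq_zero k 2]
        exact zero_pow hcard
      rw [← Nat.cast_smul_eq_nsmul k, h2, zero_smul]
    · intro h; exact absurd (Finset.mem_powerset.2 le_rfl) h
  · rintro ⟨t, s⟩ hp
    simp only [Finset.mem_sigma, Finset.mem_powerset] at hp ⊢
    exact ⟨hp.2.trans hp.1, Finset.sdiff_subset_sdiff hp.1 le_rfl⟩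
  · rintro ⟨s, u⟩ hp
    simp only [Finset.mem_sigma, Finset.mem_powerset] at hp ⊢
    have hu : u ⊆ ξ := hp.2.trans (Finset.sdiff_subset)
    exact ⟨Finset.union_subset hp.1 hu, Finset.subset_union_left⟩
  · rintro ⟨t, s⟩ hp
    simp only [Finset.mem_sigma, Finset.mem_powerset] at hp
    have : s ∪ t \ s = t := Finset.union_sdiff_of_subset hp.2
    simp [this]
  · rintro ⟨s, u⟩ hp
    simp only [Finset.mem_sigma, Finset.mem_powerset] at hp
    have h1 : (s ∪ u) \ s = u := by
      rw [Finset.union_sdiff_left]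
      exact Finset.sdiff_eq_self_of_disjoint (Finset.disjoint_left.2 fun a hau has =>
        (Finset.mem_sdiff.1 (hp.2 hau)).2 has)
    simp [h1]
  · rintro ⟨t, s⟩ hp
    simp only [Finset.mem_sigma, Finset.mem_powerset] at hp
    rw [prod_sdiff_mul k x ξ t s hp.2 hp.1]

end Aux3
set_option linter.unusedSectionVars false

section Aux4
variable {I : Type} [DecidableEq I] (x : I → k)
  (h2basis : LinearIndependent (Ssub k) (fun ξ : Finset I => ∏ i ∈ ξ, x i) ∧
      Submodule.span (Ssub k) (Set.range (fun ξ : Finset I => ∏ i ∈ ξ, x i)) = ⊤)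

/-- phiT as a linear equivalence (it is an involution). -/
def phiEquiv : Tk k ≃ₗ[k] Tk k :=
  { phiT k x h2basis with
    invFun := phiT k x h2basis
    left_inv := fun t => by
      have : ((phiT k x h2basis).comp (phiT k x h2basis)) = LinearMap.id :=
        (basisT k x h2basis).ext fun ξ => by
          simp only [LinearMap.comp_apply, phiT_basis, phiT_deltaProd, LinearMap.id_apply]
      exact DFunLike.congr_fun this t
    right_inv := fun t => by
      have : ((phiT k x h2basis).comp (phiT k x h2basis)) = LinearMap.id :=
        (basisT k x h2basis).ext fun ξ => by
          simp only [LinearMap.comp_apply, phiT_basis, phiT_deltaProd, LinearMap.id_apply]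
      exact DFunLike.congr_fun this t }

/-- The basis of T given by the delta products. -/
def Dbasis : Module.Basis (Finset I) k (Tk k) := (basisT k x h2basis).map (phiEquiv k x h2basis)

lemma Dbasis_apply (ξ : Finset I) : Dbasis k x h2basis ξ = deltaProd k x ξ := by
  rw [Dbasis, Module.Basis.map_apply]
  exact phiT_basis k x h2basis ξ


lemma mulT_smul (a : k) (t : Tk k) : mulT k (a • t) = a * mulT k t := by
  rw [smul_eq_tmul_mul, map_mul, mulT_tmul, mul_one]

/-- mulT as a k-linear map. -/
def mulTlin : Tk k →ₗ[k] k where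
  toFun := mulT k
  map_add' := map_add _
  map_smul' := mulT_smul k


lemma mulT_Delta (a : k) : mulT k (Delta k a) = 0 := by
  rw [Delta, map_add, mulT_tmul, mulT_tmul, one_mul, mul_one]
  exact CharTwo.add_self_eq_zero a


lemma mulT_deltaProd (ξ : Finset I) :
    mulT k (deltaProd k x ξ) = if ξ = ∅ then 1 else 0 := by
  rw [deltaProd, map_prod]
  split_ifs with h
  · simp [h]
  · obtain ⟨i, hi⟩ := Finset.nonempty_iff_ne_empty.2 h
    exact Finset.prod_eq_zero hi (mulT_Delta k (x i))

lemma Dbasis_coord_empty : (Dbasis k x h2basis).coord ∅ = mulTlin k := by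
  refine (Dbasis k x h2basis).ext fun ξ => ?_
  rw [Module.Basis.coord_apply, Module.Basis.repr_self_apply]
  show _ = mulT k (Dbasis k x h2basis ξ)
  rw [Dbasis_apply, mulT_deltaProd]

end Aux4
set_option linter.unusedSectionVars false

section Aux5
variable {I : Type} [DecidableEq I] (x : I → k)
  (h2basis : LinearIndependent (Ssub k) (fun ξ : Finset I => ∏ i ∈ ξ, x i) ∧
      Submodule.span (Ssub k) (Set.range (fun ξ : Finset I => ∏ i ∈ ξ, x i)) = ⊤)

/-- span of delta products of size at least q -/
def Wspan (q : ℕ) : Submodule k (Tk k) :=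
  Submodule.span k (Dbasis k x h2basis '' {ξ : Finset I | q ≤ ξ.card})

lemma add_self_T (t : Tk k) : t + t = 0 := by
  rw [← two_smul k t, show (2:k) = 0 from by exact_mod_cast CharP.cast_eq_zero k 2, zero_smul]

lemma Delta_sq (a : k) : Delta k a * Delta k a = 0 := by
  rw [Delta, add_mul, mul_add, mul_add]
  simp only [Algebra.TensorProduct.tmul_mul_tmul, one_mul, mul_one]
  have h1 : (a * a) ⊗ₜ[Ssub k] (1:k) = (1:k) ⊗ₜ[Ssub k] (a * a) := by
    have := sq_tmul k a 1 1
    rwa [mul_one, pow_two] at this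
  have h2 : ∀ u v : Tk k, u + v + (v + u) = (u + u) + (v + v) := fun u v => by ring
  rw [h1, h2, add_self_T, add_self_T, add_zero]

lemma deltaProd_mul_of_not_disjoint {ξ η : Finset I} (h : ¬ Disjoint ξ η) :
    deltaProd k x ξ * deltaProd k x η = 0 := by
  obtain ⟨i, hiξ, hiη⟩ := Finset.not_disjoint_iff.1 h
  rw [deltaProd, deltaProd, ← Finset.mul_prod_erase _ _ hiξ, ← Finset.mul_prod_erase _ _ hiη,
    show (Delta k (x i) * ∏ j ∈ ξ.erase i, Delta k (x j)) *
      (Delta k (x i) * ∏ j ∈ η.erase i, Delta k (x j)) =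
      (Delta k (x i) * Delta k (x i)) *
        ((∏ j ∈ ξ.erase i, Delta k (x j)) * ∏ j ∈ η.erase i, Delta k (x j)) from by ring,
    Delta_sq, zero_mul]

lemma deltaProd_mul_of_disjoint {ξ η : Finset I} (h : Disjoint ξ η) :
    deltaProd k x ξ * deltaProd k x η = deltaProd k x (ξ ∪ η) := by
  rw [deltaProd, deltaProd, deltaProd, Finset.prod_union h]

lemma Wspan_mul {p r : ℕ} {m n : Tk k} (hm : m ∈ Wspan k x h2basis p)
    (hn : n ∈ Wspan k x h2basis r) : m * n ∈ Wspan k x h2basis (p + r) := by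
  have key : Wspan k x h2basis p * Wspan k x h2basis r ≤ Wspan k x h2basis (p + r) := by
    rw [Wspan, Wspan, Submodule.span_mul_span]
    rw [Submodule.span_le]
    rintro z hz
    obtain ⟨a, ha, b, hb, rfl⟩ := Set.mem_mul.1 hz
    obtain ⟨ξ, hξ, rfl⟩ := ha
    obtain ⟨η, hη, rfl⟩ := hb
    simp only [Set.mem_setOf_eq] at hξ hη
    rw [Dbasis_apply, Dbasis_apply]
    by_cases hd : Disjoint ξ η
    · rw [deltaProd_mul_of_disjoint k x hd, ← Dbasis_apply k x h2basis]
      refine Submodule.subset_span ⟨ξ ∪ η, ?_, rfl⟩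
      simp only [Set.mem_setOf_eq]
      rw [Finset.card_union_of_disjoint hd]
      omega
    · rw [deltaProd_mul_of_not_disjoint k x hd]
      exact (Wspan k x h2basis (p + r)).zero_mem
  exact key (Submodule.mul_mem_mul hm hn)

lemma Jk_le_W1 : (Jk k : Set (Tk k)) ⊆ Wspan k x h2basis 1 := by
  intro t ht
  rw [SetLike.mem_coe, Jk, RingHom.mem_ker] at ht
  show t ∈ Wspan k x h2basis 1
  rw [Wspan, Module.Basis.mem_span_image]
  intro ξ hξ
  simp only [Finset.mem_coe, Finsupp.mem_support_iff, ne_eq] at hξ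
  show 1 ≤ ξ.card
  rcases Finset.eq_empty_or_nonempty ξ with rfl | hne
  · exfalso
    apply hξ
    have := DFunLike.congr_fun (Dbasis_coord_empty k x h2basis) t
    rw [Module.Basis.coord_apply] at this
    rw [this]
    exact ht
  · exact Finset.card_pos.2 hne

lemma Jq_le_W (q : ℕ) (hq : 1 ≤ q) : (Jk k ^ q).restrictScalars k ≤
    Wspan k x h2basis q := by
  induction q, hq using Nat.le_induction with
  | base =>
      intro t ht
      rw [Submodule.restrictScalars_mem, Submodule.pow_one] at ht
      exact Jk_le_W1 k x h2basis ht
  | succ q hq ih =>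
      intro t ht
      rw [Submodule.restrictScalars_mem, Submodule.pow_succ] at ht
      refine Submodule.mul_induction_on ht (fun m hm n hn => ?_) (fun a b ha hb => ?_)
      · exact Wspan_mul k x h2basis (ih hm) (Jk_le_W1 k x h2basis hn)
      · exact (Wspan k x h2basis (q+1)).add_mem ha hb

lemma W_le_Jq (q : ℕ) : Wspan k x h2basis q ≤ (Jk k ^ q).restrictScalars k := by
  rw [Wspan, Submodule.span_le]
  rintro z ⟨ξ, hξ, rfl⟩
  rw [Dbasis_apply]
  exact deltaProd_mem k x q ξ hξ

lemma JqMod_eq_W (q : ℕ) (hq : 1 ≤ q) : JqMod k q = Wspan k x h2basis q := by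
  exact le_antisymm (Jq_le_W k x h2basis q hq) (W_le_Jq k x h2basis q)

end Aux5
theorem stmt_5 {I : Type} (x : I → k) (q : ℕ) (hq : 1 ≤ q)
    (h2basis : LinearIndependent (Ssub k) (fun ξ : Finset I => ∏ i ∈ ξ, x i) ∧
      Submodule.span (Ssub k) (Set.range (fun ξ : Finset I => ∏ i ∈ ξ, x i)) = ⊤) :
    (LinearIndependent k (fun ξ : {ξ : Finset I // q ≤ ξ.card} => deltaProd k x ξ.1) ∧
      Submodule.span k (Set.range (fun ξ : {ξ : Finset I // q ≤ ξ.card} => deltaProd k x ξ.1)) =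
        JqMod k q) ∧
    (LinearIndependent k (fun ξ : {ξ : Finset I // ξ.card = q} =>
        Submodule.Quotient.mk (p := JqSub k q)
          (⟨deltaProd k x ξ.1, deltaProd_mem k x q ξ.1 (le_of_eq ξ.2.symm)⟩ : JqMod k q)) ∧
      Submodule.span k (Set.range (fun ξ : {ξ : Finset I // ξ.card = q} =>
        Submodule.Quotient.mk (p := JqSub k q)
          (⟨deltaProd k x ξ.1, deltaProd_mem k x q ξ.1 (le_of_eq ξ.2.symm)⟩ : JqMod k q))) = ⊤) := by
  classical
  have hWq := JqMod_eq_W k x h2basis q hq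
  have hWq1 := JqMod_eq_W k x h2basis (q + 1) (by omega)
  -- Part (i): linear independence
  have hli1 : LinearIndependent k (fun ξ : {ξ : Finset I // q ≤ ξ.card} => deltaProd k x ξ.1) := by
    have he : (fun ξ : {ξ : Finset I // q ≤ ξ.card} => deltaProd k x ξ.1)
        = (Dbasis k x h2basis) ∘ (fun ξ : {ξ : Finset I // q ≤ ξ.card} => ξ.1) :=
      funext fun ξ => (Dbasis_apply k x h2basis ξ.1).symm
    rw [he]
    exact (Dbasis k x h2basis).linearIndependent.comp _ Subtype.val_injective
  -- Part (i): spanning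
  have hrange1 : Set.range (fun ξ : {ξ : Finset I // q ≤ ξ.card} => deltaProd k x ξ.1)
      = Dbasis k x h2basis '' {ξ : Finset I | q ≤ ξ.card} := by
    ext z
    constructor
    · rintro ⟨ξ, rfl⟩
      exact ⟨ξ.1, ξ.2, Dbasis_apply k x h2basis ξ.1⟩
    · rintro ⟨ξ, hξ, rfl⟩
      exact ⟨⟨ξ, hξ⟩, (Dbasis_apply k x h2basis ξ).symm⟩
  have hspan1 : Submodule.span k
      (Set.range (fun ξ : {ξ : Finset I // q ≤ ξ.card} => deltaProd k x ξ.1)) = JqMod k q := by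
    rw [hrange1, hWq]
    rfl
  -- Part (ii) setup
  set g : {ξ : Finset I // ξ.card = q} → JqMod k q :=
    fun ξ => ⟨deltaProd k x ξ.1, deltaProd_mem k x q ξ.1 (le_of_eq ξ.2.symm)⟩ with hg
  have hlig : LinearIndependent k g := by
    apply LinearIndependent.of_comp (JqMod k q).subtype
    have he : ((JqMod k q).subtype ∘ g)
        = (Dbasis k x h2basis) ∘ (fun ξ : {ξ : Finset I // ξ.card = q} => ξ.1) :=
      funext fun ξ => (Dbasis_apply k x h2basis ξ.1).symm
    rw [he]
    exact (Dbasis k x h2basis).linearIndependent.comp _ Subtype.val_injective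
  have hli2 : LinearIndependent k ((JqSub k q).mkQ ∘ g) := by
    have h1 := (JqSub k q).mkQ.linearIndependent_iff_of_disjoint (v := g) ?_
    · exact h1.2 hlig
    rw [Submodule.disjoint_def]
    intro y hy1 hy2
    replace hy2 : y ∈ JqSub k q := (Submodule.Quotient.mk_eq_zero _).1 (LinearMap.mem_ker.1 hy2)
    have hv1 : (y : Tk k) ∈ Submodule.span k
        (Dbasis k x h2basis '' {ξ : Finset I | ξ.card = q}) := by
      have hmem := Submodule.mem_map_of_mem (f := (JqMod k q).subtype) hy1
      rw [Submodule.map_span] at hmem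
      have himg : (JqMod k q).subtype '' Set.range g
          = Dbasis k x h2basis '' {ξ : Finset I | ξ.card = q} := by
        ext z
        constructor
        · rintro ⟨w, ⟨ξ, rfl⟩, rfl⟩
          exact ⟨ξ.1, ξ.2, Dbasis_apply k x h2basis ξ.1⟩
        · rintro ⟨ξ, hξ, rfl⟩
          exact ⟨g ⟨ξ, hξ⟩, ⟨⟨ξ, hξ⟩, rfl⟩, (Dbasis_apply k x h2basis ξ).symm⟩
      rwa [himg] at hmem
    have hv2 : (y : Tk k) ∈ Submodule.span k
        (Dbasis k x h2basis '' {ξ : Finset I | q + 1 ≤ ξ.card}) := by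
      have hmem : (y : Tk k) ∈ JqMod k (q + 1) := Submodule.mem_comap.1 hy2
      rw [hWq1] at hmem
      exact hmem
    rw [Module.Basis.mem_span_image] at hv1 hv2
    have hsupp : ((Dbasis k x h2basis).repr (y : Tk k)).support = ∅ := by
      by_contra h
      obtain ⟨ξ, hξ⟩ := Finset.nonempty_of_ne_empty h
      have e1 := hv1 hξ
      have e2 := hv2 hξ
      simp only [Set.mem_setOf_eq] at e1 e2
      omega
    have hrepr : (Dbasis k x h2basis).repr (y : Tk k) = 0 := Finsupp.support_eq_empty.1 hsupp
    have hy0 : (y : Tk k) = 0 := (Dbasis k x h2basis).repr.map_eq_zero_iff.1 hrepr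
    exact Subtype.ext hy0
  -- Part (ii): spanning
  set g' : {ξ : Finset I // q ≤ ξ.card} → JqMod k q :=
    fun ξ => ⟨deltaProd k x ξ.1, deltaProd_mem k x q ξ.1 ξ.2⟩ with hg'
  have hspan' : Submodule.span k (Set.range g') = ⊤ := by
    apply Submodule.map_injective_of_injective (Submodule.injective_subtype (JqMod k q))
    rw [Submodule.map_span, Submodule.map_top, Submodule.range_subtype]
    have himg : (JqMod k q).subtype '' Set.range g'
        = Dbasis k x h2basis '' {ξ : Finset I | q ≤ ξ.card} := by
      ext z
      constructor
      · rintro ⟨w, ⟨ξ, rfl⟩, rfl⟩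
        exact ⟨ξ.1, ξ.2, Dbasis_apply k x h2basis ξ.1⟩
      · rintro ⟨ξ, hξ, rfl⟩
        exact ⟨g' ⟨ξ, hξ⟩, ⟨⟨ξ, hξ⟩, rfl⟩, (Dbasis_apply k x h2basis ξ).symm⟩
    rw [himg, hWq]
    rfl
  set M := Submodule.span k (Set.range ((JqSub k q).mkQ ∘ g)) with hM
  have hNtop : ∀ y : JqMod k q, (JqSub k q).mkQ y ∈ M := by
    intro y
    have hy : y ∈ Submodule.span k (Set.range g') := hspan' ▸ Submodule.mem_top
    induction hy using Submodule.span_induction with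
    | mem z hz =>
      obtain ⟨ξ, rfl⟩ := hz
      show (JqSub k q).mkQ (g' ξ) ∈ M
      by_cases hcard : ξ.1.card = q
      · apply Submodule.subset_span
        refine ⟨⟨ξ.1, hcard⟩, ?_⟩
        show (JqSub k q).mkQ (g ⟨ξ.1, hcard⟩) = (JqSub k q).mkQ (g' ξ)
        congr 1
      · have hmem : g' ξ ∈ JqSub k q := by
          show (g' ξ : Tk k) ∈ JqMod k (q + 1)
          have : q + 1 ≤ ξ.1.card := by
            have := ξ.2
            omega
          exact deltaProd_mem k x (q + 1) ξ.1 this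
        rw [Submodule.mkQ_apply, Submodule.Quotient.mk_eq_zero _ |>.2 hmem]
        exact M.zero_mem
    | zero => rw [map_zero]; exact M.zero_mem
    | add a b _ _ ha hb => rw [map_add]; exact M.add_mem ha hb
    | smul c a _ ha => rw [map_smul]; exact M.smul_mem c ha
  have hspan2 : M = ⊤ := by
    rw [eq_top_iff]
    rintro z -
    induction z using Submodule.Quotient.induction_on with
    | H y => exact hNtop y
  exact ⟨⟨hli1, hspan1⟩, ⟨hli2, hspan2⟩⟩
end
end
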